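/- arXiv:2407.04264 — 2 statements merged into one kernel-verified Lean document; each statement's English description precedes it below -/
import Mathlib

section
/- Let Φ : ℝ^d → ℝ be nonnegative and three-times differentiable, and suppose there is an increasing function ρ : [0,∞) → [0,∞) with ρ ≥ max(ρ₁, ρ₁³, ρ₂, ρ₃, ρ₁ρ₂) pointwise, where ‖∇^kΦ(w)‖_op ≤ ρ_k(Φ(w)) for k = 1,2,3, and ρ(z) = 2A(z+1)^p. Define θ by θ'(z) = 1/ρ(z), θ(0)=0. Then for all w, u ∈ ℝ^d: θ(Φ(w+u)) ≤ θ(Φ(w)) + θ'(Φ(w))⟨∇Φ(w), u⟩ + (1/2)θ'(Φ(w))⟨∇²Φ(w)u, u⟩ + (C/6)‖u‖³, where C = p² + 4p + 1. -/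
open Real RealInnerProductSpace

noncomputable def q0' (A p z : ℝ) : ℝ := (2*A)⁻¹ * (z+1) ^ (-p)
noncomputable def q1' (A p z : ℝ) : ℝ := (2*A)⁻¹ * (-p) * (z+1) ^ (-p-1)
noncomputable def q2' (A p z : ℝ) : ℝ := (2*A)⁻¹ * (-p) * (-p-1) * (z+1) ^ (-p-1-1)

lemma rpow_shift_deriv (c e z : ℝ) (hz : (0:ℝ) ≤ z) :
    HasDerivAt (fun t : ℝ => c * (t+1) ^ e) (c * e * (z+1) ^ (e-1)) z := by
  have h1 : (0:ℝ) < z + 1 := by linarith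
  have h2 : HasDerivAt (fun t : ℝ => t + 1) 1 z := (hasDerivAt_id z).add_const 1
  have h3 : HasDerivAt (fun t : ℝ => (t+1) ^ e) (e * (z+1)^(e-1) * 1) z :=
    by have h5 := h2.rpow_const (p := e) (Or.inl h1.ne'); convert h5 using 1; ring
  have h4 := h3.const_mul c
  have he : c * e * (z+1) ^ (e-1) = c * (e * (z+1)^(e-1) * 1) := by ring
  rw [he]
  exact h4

lemma q0'_deriv {A p z : ℝ} (hz : (0:ℝ) ≤ z) : HasDerivAt (q0' A p) (q1' A p z) z :=
  rpow_shift_deriv (2*A)⁻¹ (-p) z hz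

lemma q1'_deriv {A p z : ℝ} (hz : (0:ℝ) ≤ z) : HasDerivAt (q1' A p) (q2' A p z) z :=
  rpow_shift_deriv ((2*A)⁻¹ * (-p)) (-p-1) z hz

lemma q0'_nonneg {A p z : ℝ} (hA : 0 < A) (hz : (0:ℝ) ≤ z) : 0 ≤ q0' A p z :=
  mul_nonneg (by positivity) (Real.rpow_nonneg (by linarith) _)

lemma q1'_nonpos {A p z : ℝ} (hA : 0 < A) (hp : 0 ≤ p) (hz : (0:ℝ) ≤ z) : q1' A p z ≤ 0 := by
  have h := Real.rpow_nonneg (show (0:ℝ) ≤ z+1 by linarith) (-p-1)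
  have h2 : (0:ℝ) ≤ (2*A)⁻¹ := by positivity
  have heq : q1' A p z = -((2*A)⁻¹ * p * ((z+1) ^ (-p-1))) := by unfold q1'; ring
  rw [heq, neg_nonpos]
  exact mul_nonneg (mul_nonneg h2 hp) h

lemma q2'_nonneg {A p z : ℝ} (hA : 0 < A) (hp : 0 ≤ p) (hz : (0:ℝ) ≤ z) : 0 ≤ q2' A p z := by
  have h := Real.rpow_nonneg (show (0:ℝ) ≤ z+1 by linarith) (-p-1-1)
  have heq : q2' A p z = (2*A)⁻¹ * (p*(p+1)) * ((z+1) ^ (-p-1-1)) := by unfold q2'; ring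
  rw [heq]
  exact mul_nonneg (mul_nonneg (by positivity) (by nlinarith)) h

lemma q0'_mul {A p z : ℝ} (hA : 0 < A) (hz : (0:ℝ) ≤ z) :
    q0' A p z * (2*A*(z+1)^p) = 1 := by
  have h : (z+1:ℝ)^(-p) * (z+1)^p = 1 := by
    rw [← Real.rpow_add (by linarith), show -p+p = (0:ℝ) by ring, Real.rpow_zero]
  calc q0' A p z * (2*A*(z+1)^p) = ((2*A)⁻¹*(2*A)) * ((z+1)^(-p)*(z+1)^p) := by unfold q0'; ring
    _ = 1 := by rw [h, inv_mul_cancel₀ (by positivity : (2*A:ℝ) ≠ 0)]; ring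

lemma q1'_mul {A p z : ℝ} (hA : 0 < A) (hp : 0 ≤ p) (hz : (0:ℝ) ≤ z) :
    -(q1' A p z) * (2*A*(z+1)^p) ≤ p := by
  have h : (z+1:ℝ)^(-p-1) * (z+1)^p = (z+1)^(-1:ℝ) := by
    rw [← Real.rpow_add (by linarith), show -p-1+p = (-1:ℝ) by ring]
  have hle : (z+1:ℝ)^(-1:ℝ) ≤ 1 := Real.rpow_le_one_of_one_le_of_nonpos (by linarith) (by norm_num)
  have hnn : (0:ℝ) ≤ (z+1:ℝ)^(-1:ℝ) := Real.rpow_nonneg (by linarith) _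
  calc -(q1' A p z) * (2*A*(z+1)^p)
      = p * (((2*A)⁻¹*(2*A)) * ((z+1)^(-p-1)*(z+1)^p)) := by unfold q1'; ring
    _ = p * (z+1)^(-1:ℝ) := by
        rw [h, inv_mul_cancel₀ (by positivity : (2*A:ℝ) ≠ 0), one_mul]
    _ ≤ p * 1 := mul_le_mul_of_nonneg_left hle hp
    _ = p := mul_one p

lemma q2'_mul {A p z : ℝ} (hA : 0 < A) (hp : 0 ≤ p) (hz : (0:ℝ) ≤ z) :
    q2' A p z * (2*A*(z+1)^p) ≤ p*(p+1) := by
  have h : (z+1:ℝ)^(-p-1-1) * (z+1)^p = (z+1)^(-2:ℝ) := by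
    rw [← Real.rpow_add (by linarith), show -p-1-1+p = (-2:ℝ) by ring]
  have hle : (z+1:ℝ)^(-2:ℝ) ≤ 1 := Real.rpow_le_one_of_one_le_of_nonpos (by linarith) (by norm_num)
  calc q2' A p z * (2*A*(z+1)^p)
      = (p*(p+1)) * (((2*A)⁻¹*(2*A)) * ((z+1)^(-p-1-1)*(z+1)^p)) := by unfold q2'; ring
    _ = (p*(p+1)) * (z+1)^(-2:ℝ) := by
        rw [h, inv_mul_cancel₀ (by positivity : (2*A:ℝ) ≠ 0), one_mul]
    _ ≤ (p*(p+1)) * 1 := mul_le_mul_of_nonneg_left hle (by nlinarith)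
    _ = p*(p+1) := mul_one _

/-- If `g 0 = 0` and `g` has nonnegative derivative on `[0,1]`, then `g ≥ 0` on `[0,1]`. -/
lemma aux_nonneg (g g' : ℝ → ℝ)
    (hg : ∀ x ∈ Set.Icc (0:ℝ) 1, HasDerivAt g (g' x) x)
    (h0 : g 0 = 0) (h' : ∀ x ∈ Set.Icc (0:ℝ) 1, 0 ≤ g' x) :
    ∀ x ∈ Set.Icc (0:ℝ) 1, 0 ≤ g x := by
  intro x hx
  have hmono : MonotoneOn g (Set.Icc 0 1) := by
    apply monotoneOn_of_deriv_nonneg (convex_Icc 0 1)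
    · exact fun y hy => (hg y hy).continuousAt.continuousWithinAt
    · intro y hy
      rw [interior_Icc] at hy
      exact (hg y (Set.mem_Icc_of_Ioo hy)).differentiableAt.differentiableWithinAt
    · intro y hy
      rw [interior_Icc] at hy
      rw [(hg y (Set.mem_Icc_of_Ioo hy)).deriv]
      exact h' y (Set.mem_Icc_of_Ioo hy)
  have := hmono (Set.left_mem_Icc.mpr zero_le_one) hx hx.1
  linarith

/-- Third-order Taylor-type inequality on `[0,1]`. -/
lemma taylor3 (f f1 f2 f3 : ℝ → ℝ) (M : ℝ)
    (hf : ∀ x ∈ Set.Icc (0:ℝ) 1, HasDerivAt f (f1 x) x)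
    (hf1 : ∀ x ∈ Set.Icc (0:ℝ) 1, HasDerivAt f1 (f2 x) x)
    (hf2 : ∀ x ∈ Set.Icc (0:ℝ) 1, HasDerivAt f2 (f3 x) x)
    (hM : ∀ x ∈ Set.Icc (0:ℝ) 1, f3 x ≤ M) :
    f 1 ≤ f 0 + f1 0 + f2 0 / 2 + M / 6 := by
  have h1mem : (1:ℝ) ∈ Set.Icc (0:ℝ) 1 := Set.right_mem_Icc.mpr zero_le_one
  have hg2 : ∀ x ∈ Set.Icc (0:ℝ) 1, 0 ≤ f2 0 + M * x - f2 x := by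
    apply aux_nonneg _ (fun x => M - f3 x)
    · intro x hx
      have H := ((hasDerivAt_const x (f2 0)).add ((hasDerivAt_id x).const_mul M)).sub (hf2 x hx)
      rw [show M - f3 x = 0 + M * 1 - f3 x by ring]
      exact H
    · simp
    · intro x hx; have := hM x hx; linarith
  have hg1 : ∀ x ∈ Set.Icc (0:ℝ) 1, 0 ≤ f1 0 + f2 0 * x + M/2*(x*x) - f1 x := by
    apply aux_nonneg _ (fun x => f2 0 + M * x - f2 x)
    · intro x hx
      have H := (((hasDerivAt_const x (f1 0)).add ((hasDerivAt_id x).const_mul (f2 0))).add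
        (((hasDerivAt_id x).mul (hasDerivAt_id x)).const_mul (M/2))).sub (hf1 x hx)
      rw [show f2 0 + M * x - f2 x = 0 + f2 0 * 1 + M/2*(1*x+x*1) - f2 x by ring]
      exact H
    · simp
    · exact hg2
  have hg0 : ∀ x ∈ Set.Icc (0:ℝ) 1,
      0 ≤ f 0 + f1 0 * x + f2 0/2*(x*x) + M/6*(x*x*x) - f x := by
    apply aux_nonneg _ (fun x => f1 0 + f2 0 * x + M/2*(x*x) - f1 x)
    · intro x hx
      have H := ((((hasDerivAt_const x (f 0)).add ((hasDerivAt_id x).const_mul (f1 0))).add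
        (((hasDerivAt_id x).mul (hasDerivAt_id x)).const_mul (f2 0/2))).add
        ((((hasDerivAt_id x).mul (hasDerivAt_id x)).mul (hasDerivAt_id x)).const_mul (M/6))).sub
        (hf x hx)
      rw [show f1 0 + f2 0 * x + M/2*(x*x) - f1 x
        = 0 + f1 0 * 1 + f2 0/2*(1*x+x*1) + M/6*((1*x+x*1)*x + x*x*1) - f1 x by ring]
      exact H
    · simp
    · exact hg1
  have := hg0 1 h1mem
  simp only [mul_one, one_mul] at this
  linarith

/-- Core third-order expansion bound for a one-dimensional slice. -/
lemma core (A p nu : ℝ) (hA : 0 < A) (hp : 0 ≤ p) (hnu : 0 ≤ nu)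
    (θ g D1 D2 D3 r1 r2 r3 : ℝ → ℝ)
    (hgnn : ∀ t : ℝ, 0 ≤ g t)
    (hg' : ∀ t : ℝ, HasDerivAt g (D1 t) t)
    (hD1' : ∀ t : ℝ, HasDerivAt D1 (D2 t) t)
    (hD2' : ∀ t : ℝ, HasDerivAt D2 (D3 t) t)
    (hθ : ∀ z : ℝ, 0 ≤ z → HasDerivAt θ (q0' A p z) z)
    (ha : ∀ t : ℝ, |D1 t| ≤ r1 (g t) * nu)
    (hb : ∀ t : ℝ, |D2 t| ≤ r2 (g t) * (nu * nu))
    (hc3 : ∀ t : ℝ, |D3 t| ≤ r3 (g t) * (nu * (nu * nu)))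
    (hr1nn : ∀ t : ℝ, 0 ≤ r1 (g t)) (hr2nn : ∀ t : ℝ, 0 ≤ r2 (g t))
    (h13 : ∀ t : ℝ, r1 (g t) ^ 3 ≤ 2*A*(g t+1)^p)
    (h12 : ∀ t : ℝ, r1 (g t) * r2 (g t) ≤ 2*A*(g t+1)^p)
    (h33 : ∀ t : ℝ, r3 (g t) ≤ 2*A*(g t+1)^p) :
    θ (g 1) ≤ θ (g 0) + q0' A p (g 0) * D1 0
      + (q1' A p (g 0) * (D1 0 * D1 0) + q0' A p (g 0) * D2 0) / 2
      + ((p^2+4*p+1) * (nu * (nu * nu))) / 6 := by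
  have hU : (0:ℝ) ≤ nu * (nu * nu) := by positivity
  have hq0g : ∀ t : ℝ, HasDerivAt (fun s => q0' A p (g s)) (q1' A p (g t) * D1 t) t :=
    fun t => (q0'_deriv (hgnn t)).comp t (hg' t)
  have hq1g : ∀ t : ℝ, HasDerivAt (fun s => q1' A p (g s)) (q2' A p (g t) * D1 t) t :=
    fun t => (q1'_deriv (hgnn t)).comp t (hg' t)
  have hf0 : ∀ t : ℝ, HasDerivAt (fun s => θ (g s)) (q0' A p (g t) * D1 t) t :=
    fun t => (hθ (g t) (hgnn t)).comp t (hg' t)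
  have hf1 : ∀ t : ℝ, HasDerivAt (fun s => q0' A p (g s) * D1 s)
      (q1' A p (g t) * (D1 t * D1 t) + q0' A p (g t) * D2 t) t := by
    intro t
    have H := (hq0g t).mul (hD1' t)
    rw [show q1' A p (g t) * (D1 t * D1 t) + q0' A p (g t) * D2 t
      = q1' A p (g t) * D1 t * D1 t + q0' A p (g t) * D2 t by ring]
    exact H
  have hf2 : ∀ t : ℝ, HasDerivAt (fun s => q1' A p (g s) * (D1 s * D1 s) + q0' A p (g s) * D2 s)
      (q2' A p (g t) * (D1 t * (D1 t * D1 t)) + 3 * (q1' A p (g t) * (D1 t * D2 t))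
        + q0' A p (g t) * D3 t) t := by
    intro t
    have H := ((hq1g t).mul ((hD1' t).mul (hD1' t))).add ((hq0g t).mul (hD2' t))
    rw [show q2' A p (g t) * (D1 t * (D1 t * D1 t)) + 3 * (q1' A p (g t) * (D1 t * D2 t))
        + q0' A p (g t) * D3 t
      = q2' A p (g t) * D1 t * (D1 t * D1 t)
          + q1' A p (g t) * (D2 t * D1 t + D1 t * D2 t)
        + (q1' A p (g t) * D1 t * D2 t + q0' A p (g t) * D3 t) by ring]
    exact H
  -- bound the third derivative
  have hf3le : ∀ t ∈ Set.Icc (0:ℝ) 1,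
      q2' A p (g t) * (D1 t * (D1 t * D1 t)) + 3 * (q1' A p (g t) * (D1 t * D2 t))
        + q0' A p (g t) * D3 t ≤ (p^2+4*p+1) * (nu * (nu * nu)) := by
    intro t _
    have hz : (0:ℝ) ≤ g t := hgnn t
    have hq0 : 0 ≤ q0' A p (g t) := q0'_nonneg hA hz
    have hq1 : q1' A p (g t) ≤ 0 := q1'_nonpos hA hp hz
    have hq2 : 0 ≤ q2' A p (g t) := q2'_nonneg hA hp hz
    have e0 : q0' A p (g t) * (2*A*(g t+1)^p) = 1 := q0'_mul hA hz
    have e1 : -(q1' A p (g t)) * (2*A*(g t+1)^p) ≤ p := q1'_mul hA hp hz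
    have e2 : q2' A p (g t) * (2*A*(g t+1)^p) ≤ p*(p+1) := q2'_mul hA hp hz
    have hr1 : (0:ℝ) ≤ r1 (g t) * nu := mul_nonneg (hr1nn t) hnu
    -- |D1|^3 bound
    have habs1 : |D1 t * (D1 t * D1 t)| ≤ (2*A*(g t+1)^p) * (nu * (nu * nu)) := by
      have h0 : |D1 t * (D1 t * D1 t)| = |D1 t| * (|D1 t| * |D1 t|) := by
        rw [abs_mul, abs_mul]
      have hsq : |D1 t| * |D1 t| ≤ (r1 (g t) * nu) * (r1 (g t) * nu) :=
        mul_le_mul (ha t) (ha t) (abs_nonneg _) hr1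
      have hcube : |D1 t| * (|D1 t| * |D1 t|)
          ≤ (r1 (g t) * nu) * ((r1 (g t) * nu) * (r1 (g t) * nu)) :=
        mul_le_mul (ha t) hsq (mul_nonneg (abs_nonneg _) (abs_nonneg _))
          hr1 |>.trans_eq (by ring)
      rw [h0]
      refine hcube.trans ?_
      rw [show (r1 (g t) * nu) * ((r1 (g t) * nu) * (r1 (g t) * nu))
        = r1 (g t)^3 * (nu * (nu * nu)) by ring]
      exact mul_le_mul_of_nonneg_right (h13 t) hU
    have hterm1 : q2' A p (g t) * (D1 t * (D1 t * D1 t)) ≤ (p*(p+1)) * (nu * (nu * nu)) := by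
      calc q2' A p (g t) * (D1 t * (D1 t * D1 t))
          ≤ q2' A p (g t) * |D1 t * (D1 t * D1 t)| :=
            mul_le_mul_of_nonneg_left (le_abs_self _) hq2
        _ ≤ q2' A p (g t) * ((2*A*(g t+1)^p) * (nu * (nu * nu))) :=
            mul_le_mul_of_nonneg_left habs1 hq2
        _ = (q2' A p (g t) * (2*A*(g t+1)^p)) * (nu * (nu * nu)) := by ring
        _ ≤ (p*(p+1)) * (nu * (nu * nu)) := mul_le_mul_of_nonneg_right e2 hU
    have habs2 : |D1 t * D2 t| ≤ (2*A*(g t+1)^p) * (nu * (nu * nu)) := by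
      rw [abs_mul]
      have step : |D1 t| * |D2 t| ≤ (r1 (g t) * nu) * (r2 (g t) * (nu * nu)) :=
        mul_le_mul (ha t) (hb t) (abs_nonneg _) hr1
      refine step.trans ?_
      rw [show (r1 (g t) * nu) * (r2 (g t) * (nu * nu))
        = (r1 (g t) * r2 (g t)) * (nu * (nu * nu)) by ring]
      exact mul_le_mul_of_nonneg_right (h12 t) hU
    have hterm2 : 3 * (q1' A p (g t) * (D1 t * D2 t)) ≤ 3 * (p * (nu * (nu * nu))) := by
      have key : q1' A p (g t) * (D1 t * D2 t) ≤ p * (nu * (nu * nu)) := by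
        calc q1' A p (g t) * (D1 t * D2 t) ≤ -(q1' A p (g t)) * |D1 t * D2 t| := by
              have h' := le_abs_self (q1' A p (g t) * (D1 t * D2 t))
              rw [abs_mul, abs_of_nonpos hq1] at h'
              exact h'
          _ ≤ -(q1' A p (g t)) * ((2*A*(g t+1)^p) * (nu * (nu * nu))) :=
              mul_le_mul_of_nonneg_left habs2 (by linarith)
          _ = (-(q1' A p (g t)) * (2*A*(g t+1)^p)) * (nu * (nu * nu)) := by ring
          _ ≤ p * (nu * (nu * nu)) := mul_le_mul_of_nonneg_right e1 hU
      linarith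
    have hterm3 : q0' A p (g t) * D3 t ≤ nu * (nu * nu) := by
      calc q0' A p (g t) * D3 t ≤ q0' A p (g t) * |D3 t| :=
            mul_le_mul_of_nonneg_left (le_abs_self _) hq0
        _ ≤ q0' A p (g t) * (r3 (g t) * (nu * (nu * nu))) :=
            mul_le_mul_of_nonneg_left (hc3 t) hq0
        _ ≤ q0' A p (g t) * ((2*A*(g t+1)^p) * (nu * (nu * nu))) :=
            mul_le_mul_of_nonneg_left (mul_le_mul_of_nonneg_right (h33 t) hU) hq0
        _ = (q0' A p (g t) * (2*A*(g t+1)^p)) * (nu * (nu * nu)) := by ring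
        _ = nu * (nu * nu) := by rw [e0, one_mul]
    nlinarith [hterm1, hterm2, hterm3]
  have key := taylor3 (fun s => θ (g s)) (fun s => q0' A p (g s) * D1 s)
    (fun s => q1' A p (g s) * (D1 s * D1 s) + q0' A p (g s) * D2 s)
    (fun s => q2' A p (g s) * (D1 s * (D1 s * D1 s)) + 3 * (q1' A p (g s) * (D1 s * D2 s))
      + q0' A p (g s) * D3 s)
    ((p^2+4*p+1) * (nu * (nu * nu)))
    (fun t _ => hf0 t) (fun t _ => hf1 t) (fun t _ => hf2 t) hf3le
  linarith

set_option synthInstance.maxHeartbeats 400000 in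
/-- Lemma on third-order expansion under self-bounding regularity: if `Φ ≥ 0` is
`C³` with `‖∇^kΦ(w)‖_op ≤ ρ_k(Φ(w))` for `k = 1,2,3`, `ρ(z) = 2A(z+1)^p`
dominates `ρ₁, ρ₁³, ρ₂, ρ₃, ρ₁ρ₂` on `[0,∞)`, and `θ` is the antiderivative of
`1/ρ` with `θ(0) = 0`, then for all `w, u`:
`θ(Φ(w+u)) ≤ θ(Φ(w)) + θ'(Φ(w))⟨∇Φ(w),u⟩ + (1/2)θ'(Φ(w))⟨∇²Φ(w)u,u⟩ + (C/6)‖u‖³`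
with `C = p² + 4p + 1`. -/
theorem stmt_14 (d : ℕ) (Φ : EuclideanSpace ℝ (Fin d) → ℝ)
    (A p : ℝ) (hA : 0 < A) (hp : 0 ≤ p)
    (hΦnn : ∀ w, 0 ≤ Φ w) (hΦ : ContDiff ℝ 3 Φ)
    (ρ₁ ρ₂ ρ₃ ρ θ : ℝ → ℝ)
    (hρ₁mono : MonotoneOn ρ₁ (Set.Ici 0))
    (hρ₂mono : MonotoneOn ρ₂ (Set.Ici 0))
    (hρ₃mono : MonotoneOn ρ₃ (Set.Ici 0))
    (hd1 : ∀ w, ‖iteratedFDeriv ℝ 1 Φ w‖ ≤ ρ₁ (Φ w))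
    (hd2 : ∀ w, ‖iteratedFDeriv ℝ 2 Φ w‖ ≤ ρ₂ (Φ w))
    (hd3 : ∀ w, ‖iteratedFDeriv ℝ 3 Φ w‖ ≤ ρ₃ (Φ w))
    (hρ : ∀ z, ρ z = 2 * A * (z + 1) ^ p)
    (hdom : ∀ z, 0 ≤ z →
      max (max (max (ρ₁ z) ((ρ₁ z) ^ 3)) (max (ρ₂ z) (ρ₃ z))) (ρ₁ z * ρ₂ z) ≤ ρ z)
    (hθ0 : θ 0 = 0)
    (hθ' : ∀ z, 0 ≤ z → HasDerivAt θ (1 / ρ z) z) :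
    ∀ w u : EuclideanSpace ℝ (Fin d),
      θ (Φ (w + u)) ≤
        θ (Φ w) + (1 / ρ (Φ w)) * (inner ℝ (gradient Φ w) u : ℝ)
          + (1 / 2) * (1 / ρ (Φ w)) * (iteratedFDeriv ℝ 2 Φ w ![u, u])
          + ((p ^ 2 + 4 * p + 1) / 6) * ‖u‖ ^ 3 := by
  intro w u
  letI : Norm (EuclideanSpace ℝ (Fin d) →L[ℝ] EuclideanSpace ℝ (Fin d) →L[ℝ] EuclideanSpace ℝ (Fin d) →L[ℝ] ℝ) :=
    ContinuousLinearMap.hasOpNorm (𝕜 := ℝ) (𝕜₂ := ℝ) (E := EuclideanSpace ℝ (Fin d))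
      (F := EuclideanSpace ℝ (Fin d) →L[ℝ] EuclideanSpace ℝ (Fin d) →L[ℝ] ℝ)
  have hΦ' : Differentiable ℝ Φ := hΦ.differentiable (by norm_num)
  have hF1c : ContDiff ℝ 2 (fderiv ℝ Φ) := hΦ.fderiv_right (by norm_num)
  have hF1d : Differentiable ℝ (fderiv ℝ Φ) := hF1c.differentiable (by norm_num)
  have hF2c : ContDiff ℝ 1 (fderiv ℝ (fderiv ℝ Φ)) := hF1c.fderiv_right (by norm_num)
  have hF2d : Differentiable ℝ (fderiv ℝ (fderiv ℝ Φ)) := hF2c.differentiable one_ne_zero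
  have hc : ∀ t : ℝ, HasDerivAt (fun s : ℝ => w + s • u) u t := by
    intro t
    simpa using (((hasDerivAt_id t).smul_const u).const_add w)
  -- 1/ρ = q0'
  have h1ρ : ∀ z : ℝ, 0 ≤ z → 1 / ρ z = q0' A p z := by
    intro z hz
    rw [hρ, q0', Real.rpow_neg (by linarith : (0:ℝ) ≤ z+1), one_div, mul_inv]
  -- dominance split
  have hdom' : ∀ z : ℝ, 0 ≤ z → ρ₁ z ^ 3 ≤ 2*A*(z+1)^p ∧ ρ₁ z * ρ₂ z ≤ 2*A*(z+1)^p ∧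
      ρ₃ z ≤ 2*A*(z+1)^p := by
    intro z hz
    have hm := hdom z hz
    rw [hρ z] at hm
    rw [max_le_iff, max_le_iff, max_le_iff, max_le_iff] at hm
    exact ⟨hm.1.1.2, hm.2, hm.1.2.2⟩
  -- norm bounds on derivatives
  have hB1 : ∀ x : EuclideanSpace ℝ (Fin d), ‖fderiv ℝ Φ x‖ ≤ ρ₁ (Φ x) := by
    intro x
    have h := hd1 x
    rwa [← norm_iteratedFDeriv_fderiv, norm_iteratedFDeriv_zero] at h
  have hB2 : ∀ x : EuclideanSpace ℝ (Fin d), ‖fderiv ℝ (fderiv ℝ Φ) x‖ ≤ ρ₂ (Φ x) := by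
    intro x
    have h := hd2 x
    rwa [← norm_iteratedFDeriv_fderiv, ← norm_iteratedFDeriv_fderiv,
      norm_iteratedFDeriv_zero] at h
  have hB3 : ∀ x : EuclideanSpace ℝ (Fin d),
      ‖fderiv ℝ (fderiv ℝ (fderiv ℝ Φ)) x‖ ≤ ρ₃ (Φ x) := by
    intro x
    have h := hd3 x
    rwa [← norm_iteratedFDeriv_fderiv, ← norm_iteratedFDeriv_fderiv,
      ← norm_iteratedFDeriv_fderiv, norm_iteratedFDeriv_zero] at h
  -- derivative chains along the line
  have hg' : ∀ t : ℝ, HasDerivAt (fun s : ℝ => Φ (w + s • u)) (fderiv ℝ Φ (w + t • u) u) t :=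
    fun t => (hΦ' (w + t • u)).hasFDerivAt.comp_hasDerivAt t (hc t)
  have hD1' : ∀ t : ℝ, HasDerivAt (fun s : ℝ => fderiv ℝ Φ (w + s • u) u)
      (fderiv ℝ (fderiv ℝ Φ) (w + t • u) u u) t := by
    intro t
    have h1 : HasDerivAt (fun s : ℝ => fderiv ℝ Φ (w + s • u))
        (fderiv ℝ (fderiv ℝ Φ) (w + t • u) u) t :=
      (hF1d (w + t • u)).hasFDerivAt.comp_hasDerivAt t (hc t)
    simpa using h1.clm_apply (hasDerivAt_const t u)
  have hD2' : ∀ t : ℝ, HasDerivAt (fun s : ℝ => fderiv ℝ (fderiv ℝ Φ) (w + s • u) u u)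
      (fderiv ℝ (fderiv ℝ (fderiv ℝ Φ)) (w + t • u) u u u) t := by
    intro t
    have h1 : HasDerivAt (fun s : ℝ => fderiv ℝ (fderiv ℝ Φ) (w + s • u))
        (fderiv ℝ (fderiv ℝ (fderiv ℝ Φ)) (w + t • u) u) t :=
      HasFDerivAt.comp_hasDerivAt (l := fderiv ℝ (fderiv ℝ Φ)) t (hF2d (w + t • u)).hasFDerivAt (hc t)
    have h2 := h1.clm_apply (hasDerivAt_const t u)
    simpa using h2.clm_apply (hasDerivAt_const t u)
  -- θ has derivative q0'
  have hθq : ∀ z : ℝ, 0 ≤ z → HasDerivAt θ (q0' A p z) z := by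
    intro z hz
    have h := hθ' z hz
    rwa [h1ρ z hz] at h
  -- pointwise bounds
  have ha : ∀ t : ℝ, |fderiv ℝ Φ (w + t • u) u| ≤ ρ₁ (Φ (w + t • u)) * ‖u‖ := by
    intro t
    rw [← Real.norm_eq_abs]
    exact le_trans ((fderiv ℝ Φ (w + t • u)).le_opNorm u)
      (mul_le_mul_of_nonneg_right (hB1 _) (norm_nonneg u))
  have hb : ∀ t : ℝ, |fderiv ℝ (fderiv ℝ Φ) (w + t • u) u u|
      ≤ ρ₂ (Φ (w + t • u)) * (‖u‖ * ‖u‖) := by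
    intro t
    rw [← Real.norm_eq_abs]
    calc ‖fderiv ℝ (fderiv ℝ Φ) (w + t • u) u u‖
        ≤ ‖fderiv ℝ (fderiv ℝ Φ) (w + t • u) u‖ * ‖u‖ :=
          (fderiv ℝ (fderiv ℝ Φ) (w + t • u) u).le_opNorm u
      _ ≤ (‖fderiv ℝ (fderiv ℝ Φ) (w + t • u)‖ * ‖u‖) * ‖u‖ :=
          mul_le_mul_of_nonneg_right ((fderiv ℝ (fderiv ℝ Φ) (w + t • u)).le_opNorm u)
            (norm_nonneg u)
      _ ≤ (ρ₂ (Φ (w + t • u)) * ‖u‖) * ‖u‖ :=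
          mul_le_mul_of_nonneg_right
            (mul_le_mul_of_nonneg_right (hB2 _) (norm_nonneg u)) (norm_nonneg u)
      _ = ρ₂ (Φ (w + t • u)) * (‖u‖ * ‖u‖) := by ring
  have hc3 : ∀ t : ℝ, |fderiv ℝ (fderiv ℝ (fderiv ℝ Φ)) (w + t • u) u u u|
      ≤ ρ₃ (Φ (w + t • u)) * (‖u‖ * (‖u‖ * ‖u‖)) := by
    intro t
    rw [← Real.norm_eq_abs]
    have hop3 : ‖fderiv ℝ (fderiv ℝ (fderiv ℝ Φ)) (w + t • u) u‖
        ≤ ‖fderiv ℝ (fderiv ℝ (fderiv ℝ Φ)) (w + t • u)‖ * ‖u‖ := by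
      have h := ContinuousLinearMap.le_opNorm (𝕜 := ℝ) (𝕜₂ := ℝ) (E := EuclideanSpace ℝ (Fin d))
        (F := EuclideanSpace ℝ (Fin d) →L[ℝ] EuclideanSpace ℝ (Fin d) →L[ℝ] ℝ)
        (fderiv ℝ (fderiv ℝ (fderiv ℝ Φ)) (w + t • u)) u
      exact h
    calc ‖fderiv ℝ (fderiv ℝ (fderiv ℝ Φ)) (w + t • u) u u u‖
        ≤ ‖fderiv ℝ (fderiv ℝ (fderiv ℝ Φ)) (w + t • u) u u‖ * ‖u‖ :=
          (fderiv ℝ (fderiv ℝ (fderiv ℝ Φ)) (w + t • u) u u).le_opNorm u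
      _ ≤ (‖fderiv ℝ (fderiv ℝ (fderiv ℝ Φ)) (w + t • u) u‖ * ‖u‖) * ‖u‖ :=
          mul_le_mul_of_nonneg_right
            ((fderiv ℝ (fderiv ℝ (fderiv ℝ Φ)) (w + t • u) u).le_opNorm u) (norm_nonneg u)
      _ ≤ ((‖fderiv ℝ (fderiv ℝ (fderiv ℝ Φ)) (w + t • u)‖ * ‖u‖) * ‖u‖) * ‖u‖ :=
          mul_le_mul_of_nonneg_right (mul_le_mul_of_nonneg_right
            hop3 (norm_nonneg u))
            (norm_nonneg u)
      _ ≤ ((ρ₃ (Φ (w + t • u)) * ‖u‖) * ‖u‖) * ‖u‖ :=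
          mul_le_mul_of_nonneg_right (mul_le_mul_of_nonneg_right
            (mul_le_mul_of_nonneg_right (hB3 _) (norm_nonneg u)) (norm_nonneg u)) (norm_nonneg u)
      _ = ρ₃ (Φ (w + t • u)) * (‖u‖ * (‖u‖ * ‖u‖)) := by ring
  have hr1nn : ∀ t : ℝ, 0 ≤ ρ₁ (Φ (w + t • u)) := fun t => le_trans (norm_nonneg _) (hB1 _)
  have hr2nn : ∀ t : ℝ, 0 ≤ ρ₂ (Φ (w + t • u)) := fun t => le_trans (ContinuousLinearMap.opNorm_nonneg _) (hB2 _)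
  -- apply the core lemma
  have key := core A p ‖u‖ hA hp (norm_nonneg u) θ
    (fun t => Φ (w + t • u))
    (fun t => fderiv ℝ Φ (w + t • u) u)
    (fun t => fderiv ℝ (fderiv ℝ Φ) (w + t • u) u u)
    (fun t => fderiv ℝ (fderiv ℝ (fderiv ℝ Φ)) (w + t • u) u u u)
    ρ₁ ρ₂ ρ₃
    (fun t => hΦnn _) hg' hD1' hD2' hθq ha hb hc3 hr1nn hr2nn
    (fun t => (hdom' _ (hΦnn _)).1)
    (fun t => (hdom' _ (hΦnn _)).2.1)
    (fun t => (hdom' _ (hΦnn _)).2.2)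
  simp only [one_smul, zero_smul, add_zero] at key
  -- rewrite the target
  have hinner : (inner ℝ (gradient Φ w) u : ℝ) = fderiv ℝ Φ w u :=
    InnerProductSpace.toDual_symm_apply
  have hiter2 : iteratedFDeriv ℝ 2 Φ w ![u, u] = fderiv ℝ (fderiv ℝ Φ) w u u := by
    rw [iteratedFDeriv_two_apply]
    simp
  have hneg : q1' A p (Φ w) * (fderiv ℝ Φ w u * fderiv ℝ Φ w u) ≤ 0 :=
    mul_nonpos_of_nonpos_of_nonneg (q1'_nonpos hA hp (hΦnn w)) (mul_self_nonneg _)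
  rw [hinner, hiter2, h1ρ (Φ w) (hΦnn w),
    show ((p ^ 2 + 4 * p + 1) / 6) * ‖u‖ ^ 3
      = ((p^2+4*p+1) * (‖u‖ * (‖u‖ * ‖u‖))) / 6 by ring]
  linarith
end

section
/- Let Φ : ℝ^d → ℝ be nonnegative and twice differentiable with ‖∇Φ(w)‖ ≤ ρ(Φ(w)) and ‖∇²Φ(w)‖_op ≤ ρ(Φ(w)) for an increasing positive function ρ, and let θ satisfy θ'(z) = 1/ρ(z), θ(0) = 0, θ'' ≤ 0. Then for all w, u ∈ ℝ^d: θ(Φ(w+u)) ≤ θ(Φ(w)) + θ'(Φ(w))⟨∇Φ(w), u⟩ + (1/2)‖u‖². -/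
open Set Filter
open scoped Topology

lemma aux_antitone_cont {τ : ℝ → ℝ}
    (hanti : ∀ z₁ z₂, 0 ≤ z₁ → z₁ ≤ z₂ → τ z₂ ≤ τ z₁)
    (hOC : Set.OrdConnected (τ '' Set.Ici 0)) : ContinuousOn τ (Set.Ici 0) := by
  intro a ha
  have ha' : (0:ℝ) ≤ a := ha
  rw [ContinuousWithinAt]
  have hsplit : (Set.Ici (0:ℝ)) = Set.Icc 0 a ∪ Set.Ici a := (Set.Icc_union_Ici_eq_Ici ha').symm
  rw [hsplit, nhdsWithin_union, tendsto_sup]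
  constructor
  · -- left part
    rw [tendsto_order]
    constructor
    · intro b hb
      filter_upwards [self_mem_nhdsWithin] with z hz
      exact hb.trans_le (hanti z a hz.1 hz.2)
    · intro b hb
      rcases eq_or_lt_of_le ha' with h0 | h0
      · filter_upwards [self_mem_nhdsWithin] with z hz
        have : z = a := le_antisymm hz.2 (h0 ▸ hz.1)
        rw [this]; exact hb
      · by_cases hc : ∃ c, 0 ≤ c ∧ c < a ∧ τ c < b
        · obtain ⟨c, hc0, hca, hcb⟩ := hc
          have hm : Set.Icc 0 a ∩ Set.Ici c ∈ 𝓝[Set.Icc 0 a] a :=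
            inter_mem self_mem_nhdsWithin
              (mem_nhdsWithin_of_mem_nhds (Ici_mem_nhds hca))
          filter_upwards [hm] with z hz
          exact lt_of_le_of_lt (hanti c z hc0 hz.2) hcb
        · push_neg at hc
          exfalso
          set m := (τ a + b)/2 with hmdef
          have hm1 : τ a < m := by
            have := hb; simp only [hmdef]; linarith
          have hm2 : m < b := by simp only [hmdef]; linarith
          have hτ0 : b ≤ τ 0 := hc 0 le_rfl h0
          have hmem : m ∈ τ '' Set.Ici 0 :=
            hOC.out ⟨a, ha, rfl⟩ ⟨0, Set.self_mem_Ici, rfl⟩ ⟨hm1.le, hm2.le.trans hτ0⟩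
          obtain ⟨c, hc0, hcτ⟩ := hmem
          rcases lt_or_ge c a with h | h
          · have := hc c hc0 h; linarith
          · have := hanti a c ha' h; linarith
  · -- right part
    rw [tendsto_order]
    constructor
    · intro b hb
      by_cases hcex : ∃ c, a < c ∧ b < τ c
      · obtain ⟨c, hac, hbc⟩ := hcex
        filter_upwards [Icc_mem_nhdsGE_of_mem (Set.left_mem_Ico.2 hac)] with z hz
        exact hbc.trans_le (hanti z c (ha'.trans hz.1) hz.2)
      · push_neg at hcex
        exfalso
        set m := (b + τ a)/2 with hmdef
        have hm1 : b < m := by simp only [hmdef]; linarith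
        have hm2 : m < τ a := by simp only [hmdef]; linarith
        have h1 : τ (a+1) ≤ b := hcex (a+1) (by linarith)
        have hmem : m ∈ τ '' Set.Ici 0 :=
          hOC.out ⟨a+1, by simp; linarith, rfl⟩ ⟨a, ha, rfl⟩ ⟨by linarith, hm2.le⟩
        obtain ⟨c, hc0, hcτ⟩ := hmem
        rcases le_or_gt c a with h | h
        · have := hanti c a hc0 h; linarith
        · have := hcex c h; linarith
    · intro b hb
      filter_upwards [self_mem_nhdsWithin] with z hz
      exact (hanti a z ha' hz).trans_lt hb
open Set Filter
open scoped Topology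

/-- Second-order variant: if `Φ ≥ 0` is `C²` with `‖∇Φ(w)‖ ≤ ρ(Φ(w))` and
`‖∇²Φ(w)‖_op ≤ ρ(Φ(w))` for an increasing positive `ρ`, and `θ` is concave with
`θ' = 1/ρ`, `θ(0) = 0`, then
`θ(Φ(w+u)) ≤ θ(Φ(w)) + θ'(Φ(w))⟨∇Φ(w),u⟩ + (1/2)‖u‖²`. -/
theorem stmt_15 (d : ℕ) (Φ : EuclideanSpace ℝ (Fin d) → ℝ)
    (hΦnn : ∀ w, 0 ≤ Φ w) (hΦ : ContDiff ℝ 2 Φ)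
    (ρ θ : ℝ → ℝ)
    (hρpos : ∀ z, 0 ≤ z → 0 < ρ z)
    (hρmono : MonotoneOn ρ (Set.Ici 0))
    (hd1 : ∀ w, ‖gradient Φ w‖ ≤ ρ (Φ w))
    (hd2 : ∀ w, ‖iteratedFDeriv ℝ 2 Φ w‖ ≤ ρ (Φ w))
    (hθ0 : θ 0 = 0)
    (hθ' : ∀ z, 0 ≤ z → HasDerivAt θ (1 / ρ z) z)
    (hconc : ∀ z₁ z₂, 0 ≤ z₁ → z₁ ≤ z₂ → 1 / ρ z₂ ≤ 1 / ρ z₁) :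
    ∀ w u : EuclideanSpace ℝ (Fin d),
      θ (Φ (w + u)) ≤
        θ (Φ w) + (1 / ρ (Φ w)) * (inner ℝ (gradient Φ w) u : ℝ)
          + (1 / 2) * ‖u‖ ^ 2 := by
  intro w u
  have hΦ1 : Differentiable ℝ Φ := hΦ.differentiable (by norm_num)
  set γ : ℝ → EuclideanSpace ℝ (Fin d) := fun t => w + t • u with hγdef
  have hγ : ∀ t, HasDerivAt γ u t := by
    intro t
    simpa [hγdef] using ((hasDerivAt_id t).smul_const u).const_add w
  have hγc : Continuous γ := by
    exact continuous_const.add (continuous_id.smul continuous_const)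
  set A : EuclideanSpace ℝ (Fin d) → (EuclideanSpace ℝ (Fin d) →L[ℝ] ℝ) := fderiv ℝ Φ with hAdef
  have hA : ContDiff ℝ 1 A := hΦ.fderiv_right (by norm_num)
  set φ : ℝ → ℝ := fun t => Φ (γ t) with hφdef
  set h : ℝ → ℝ := fun t => A (γ t) u with hhdef
  set H : ℝ → ℝ := fun t => fderiv ℝ A (γ t) u u with hHdef
  have hφd : ∀ t, HasDerivAt φ (h t) t := fun t =>
    ((hΦ1 (γ t)).hasFDerivAt).comp_hasDerivAt t (hγ t)
  have hφc : Continuous φ := hΦ.continuous.comp hγc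
  have hφnn : ∀ t, 0 ≤ φ t := fun t => hΦnn _
  have hh : ∀ t, HasDerivAt h (H t) t := by
    intro t
    have h1 : HasDerivAt (fun s => A (γ s)) (fderiv ℝ A (γ t) u) t :=
      ((hA.differentiable (by norm_num) (γ t)).hasFDerivAt).comp_hasDerivAt t (hγ t)
    simpa using h1.clm_apply (hasDerivAt_const t u)
  have hhc : Continuous h := continuous_iff_continuousAt.2 fun t => (hh t).continuousAt
  -- τ and T
  set τ : ℝ → ℝ := fun z => 1 / ρ z with hτdef
  set T : ℝ → ℝ := fun t => τ (φ t) with hTdef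
  have hTpos : ∀ t, 0 < T t := fun t => one_div_pos.2 (hρpos _ (hφnn t))
  have hT0 : ∀ t, T t ≤ τ 0 := fun t => hconc 0 (φ t) le_rfl (hφnn t)
  have hTanti : ∀ s t, φ s ≤ φ t → T t ≤ T s := fun s t hst => hconc _ _ (hφnn s) hst
  -- norm facts
  have hgradnorm : ∀ x, ‖A x‖ = ‖gradient Φ x‖ := by
    intro x
    rw [gradient]
    exact ((InnerProductSpace.toDual ℝ _).symm.norm_map (fderiv ℝ Φ x)).symm
  have hgradinner : ∀ x v, (inner ℝ (gradient Φ x) v : ℝ) = A x v := by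
    intro x v
    rw [gradient]
    exact InnerProductSpace.toDual_symm_apply
  have hHb : ∀ t, |H t| ≤ ρ (φ t) * ‖u‖ ^ 2 := by
    intro t
    have e1 : H t = iteratedFDeriv ℝ 2 Φ (γ t) ![u, u] := by
      rw [iteratedFDeriv_two_apply]
      simp [hHdef, hAdef]
    have e2 : ‖iteratedFDeriv ℝ 2 Φ (γ t) ![u, u]‖ ≤ ‖iteratedFDeriv ℝ 2 Φ (γ t)‖ * (‖u‖ * ‖u‖) := by
      have := (iteratedFDeriv ℝ 2 Φ (γ t)).le_opNorm ![u, u]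
      simpa [Fin.prod_univ_two] using this
    rw [e1, ← Real.norm_eq_abs]
    calc ‖iteratedFDeriv ℝ 2 Φ (γ t) ![u, u]‖ ≤ ‖iteratedFDeriv ℝ 2 Φ (γ t)‖ * (‖u‖ * ‖u‖) := e2
      _ ≤ ρ (φ t) * (‖u‖ * ‖u‖) := by
          apply mul_le_mul_of_nonneg_right (hd2 (γ t)) (by positivity)
      _ = ρ (φ t) * ‖u‖ ^ 2 := by ring
  -- g and g'
  set g : ℝ → ℝ := fun t => θ (φ t) with hgdef
  set g' : ℝ → ℝ := fun t => T t * h t with hg'def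
  have hg : ∀ t, HasDerivAt g (g' t) t := fun t =>
    (hθ' (φ t) (hφnn t)).comp t (hφd t)
  -- continuity of g' on [0,1]
  have hOC : Set.OrdConnected (τ '' Set.Ici 0) :=
    Set.OrdConnected.image_hasDerivWithinAt Set.ordConnected_Ici
      (fun z hz => (hθ' z hz).hasDerivWithinAt)
  have hτcont : ContinuousOn τ (Set.Ici 0) := aux_antitone_cont hconc hOC
  have hTc : ContinuousOn T (Set.Icc (0:ℝ) 1) :=
    hτcont.comp hφc.continuousOn (fun t _ => hφnn t)
  have hg'c : ContinuousOn g' (Set.Icc (0:ℝ) 1) := hTc.mul hhc.continuousOn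
  -- key bound T x * H x ≤ ‖u‖^2
  have hkey : ∀ t, T t * H t ≤ ‖u‖ ^ 2 := by
    intro t
    have h1 : T t * H t ≤ T t * (ρ (φ t) * ‖u‖ ^ 2) :=
      mul_le_mul_of_nonneg_left ((le_abs_self _).trans (hHb t)) (hTpos t).le
    have h2 : T t * (ρ (φ t) * ‖u‖ ^ 2) = ‖u‖ ^ 2 := by
      have : ρ (φ t) ≠ 0 := (hρpos _ (hφnn t)).ne'
      simp only [hTdef, hτdef]; field_simp
    linarith
  -- step 1 : g' x ≤ g' 0 + ‖u‖^2 * x on [0,1]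
  have bound1 : ∀ x ∈ Set.Icc (0:ℝ) 1, g' x ≤ g' 0 + ‖u‖ ^ 2 * x := by
    have := image_le_of_liminf_slope_right_le_deriv_boundary (f := g')
      (a := 0) (b := 1) (B := fun t => g' 0 + ‖u‖ ^ 2 * t) (B' := fun _ => ‖u‖ ^ 2)
      hg'c (by simp)
      (by fun_prop)
      (fun x _ => by simpa using (((hasDerivAt_id x).const_mul (‖u‖ ^ 2)).const_add (g' 0)).hasDerivWithinAt)
      ?_
    · exact fun x hx => this hx
    intro x hx r hr
    -- slope of h tends to H x from the right
    have hslope : Tendsto (slope h x) (𝓝[>] x) (𝓝 (H x)) := by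
      have := hasDerivAt_iff_tendsto_slope.1 (hh x)
      exact this.mono_left (nhdsWithin_mono x (fun z hz => Set.mem_compl_singleton_iff.2 hz.ne'))
    have hsl' : Tendsto (fun z => T x * slope h x z) (𝓝[>] x) (𝓝 (T x * H x)) :=
      hslope.const_mul _
    have ev1 : ∀ᶠ z in 𝓝[>] x, T x * slope h x z < r :=
      hsl'.eventually (eventually_lt_nhds (lt_of_le_of_lt (hkey x) hr))
    -- helper : from comparison eventually, get slope bound eventually
    have main : (∀ᶠ z in 𝓝[>] x, T z * h z ≤ T x * h z) →
        ∀ᶠ z in 𝓝[>] x, slope g' x z < r := by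
      intro hev
      filter_upwards [hev, ev1, self_mem_nhdsWithin] with z h1 h2 hz
      have hzx : (0:ℝ) < z - x := sub_pos.2 hz
      have e1 : slope g' x z = (g' z - g' x) / (z - x) := slope_def_field g' x z
      have e2 : slope h x z = (h z - h x) / (z - x) := slope_def_field h x z
      have e3 : (g' z - g' x) / (z - x) ≤ (T x * h z - T x * h x) / (z - x) :=
        (div_le_div_iff_of_pos_right hzx).2 (sub_le_sub_right h1 _)
      calc slope g' x z ≤ (T x * h z - T x * h x) / (z - x) := by rw [e1]; exact e3
        _ = T x * slope h x z := by rw [e2]; ring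
        _ < r := h2
    -- monotone direction helper
    have mono_dir : 0 ≤ h x → (∀ᶠ z in 𝓝[>] x, 0 < h z) →
        ∀ᶠ z in 𝓝[>] x, T z * h z ≤ T x * h z := by
      intro hge hpos
      obtain ⟨c, hc, hsub⟩ := mem_nhdsGT_iff_exists_Ioc_subset.1 hpos
      have hmono : MonotoneOn φ (Set.Icc x c) := by
        apply monotoneOn_of_deriv_nonneg (convex_Icc x c) hφc.continuousOn
          (fun z _ => (hφd z).differentiableAt.differentiableWithinAt)
        intro z hz
        rw [interior_Icc] at hz
        rw [(hφd z).deriv]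
        exact (hsub ⟨hz.1, hz.2.le⟩).le
      filter_upwards [Ioc_mem_nhdsGT_of_mem ⟨le_rfl, hc⟩] with z hz
      have h1 : φ x ≤ φ z := hmono ⟨le_rfl, le_of_lt hc⟩ ⟨hz.1.le, hz.2⟩ hz.1.le
      exact mul_le_mul_of_nonneg_right (hTanti x z h1) (hsub hz).le
    have anti_dir : h x ≤ 0 → (∀ᶠ z in 𝓝[>] x, h z < 0) →
        ∀ᶠ z in 𝓝[>] x, T z * h z ≤ T x * h z := by
      intro hge hneg
      obtain ⟨c, hc, hsub⟩ := mem_nhdsGT_iff_exists_Ioc_subset.1 hneg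
      have hanti : AntitoneOn φ (Set.Icc x c) := by
        apply antitoneOn_of_deriv_nonpos (convex_Icc x c) hφc.continuousOn
          (fun z _ => (hφd z).differentiableAt.differentiableWithinAt)
        intro z hz
        rw [interior_Icc] at hz
        rw [(hφd z).deriv]
        exact (hsub ⟨hz.1, hz.2.le⟩).le
      filter_upwards [Ioc_mem_nhdsGT_of_mem ⟨le_rfl, hc⟩] with z hz
      have h1 : φ z ≤ φ x := hanti ⟨le_rfl, le_of_lt hc⟩ ⟨hz.1.le, hz.2⟩ hz.1.le
      exact mul_le_mul_of_nonpos_right (hTanti z x h1) (hsub hz).le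
    rcases lt_trichotomy (h x) 0 with hx0 | hx0 | hx0
    · -- h x < 0
      have ev : ∀ᶠ z in 𝓝[>] x, h z < 0 :=
        ((hhc.tendsto x).eventually (eventually_lt_nhds hx0)).filter_mono nhdsWithin_le_nhds
      exact (main (anti_dir hx0.le ev)).frequently
    · -- h x = 0
      rcases lt_trichotomy (H x) 0 with hH | hH | hH
      · have ev : ∀ᶠ z in 𝓝[>] x, h z < 0 := by
          have e1 : ∀ᶠ z in 𝓝[>] x, slope h x z < 0 :=
            hslope.eventually (eventually_lt_nhds hH)
          filter_upwards [e1, self_mem_nhdsWithin] with z h1 hz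
          have hzx : (0:ℝ) < z - x := sub_pos.2 hz
          rw [slope_def_field, div_neg_iff] at h1
          rcases h1 with ⟨h1, h2⟩ | ⟨h1, h2⟩
          · linarith
          · linarith [hx0 ▸ h1]
        exact (main (anti_dir hx0.le ev)).frequently
      · -- fallback: H x = 0
        have hτ0pos : 0 < τ 0 := one_div_pos.2 (hρpos 0 le_rfl)
        have hrpos : 0 < r := lt_of_le_of_lt (by positivity) hr
        have ev2 : ∀ᶠ z in 𝓝[>] x, slope h x z < r / τ 0 := by
          apply hslope.eventually (eventually_lt_nhds ?_)
          rw [hH]; positivity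
        have evfin : ∀ᶠ z in 𝓝[>] x, slope g' x z < r := by
          filter_upwards [ev2, self_mem_nhdsWithin] with z h2 hz
          have hzx : (0:ℝ) < z - x := sub_pos.2 hz
          have e0 : g' x = 0 := by rw [hg'def]; simp [hx0]
          have e1 : slope g' x z = T z * slope h x z := by
            rw [slope_def_field, slope_def_field, e0, hx0]
            ring
          rw [e1]
          rcases le_or_gt (slope h x z) 0 with hs | hs
          · calc T z * slope h x z ≤ 0 := mul_nonpos_of_nonneg_of_nonpos (hTpos z).le hs
              _ < r := hrpos
          · calc T z * slope h x z ≤ τ 0 * slope h x z :=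
                mul_le_mul_of_nonneg_right (hT0 z) hs.le
              _ < τ 0 * (r / τ 0) := by
                exact mul_lt_mul_of_pos_left h2 hτ0pos
              _ = r := by field_simp
        exact evfin.frequently
      · have ev : ∀ᶠ z in 𝓝[>] x, 0 < h z := by
          have e1 : ∀ᶠ z in 𝓝[>] x, 0 < slope h x z :=
            hslope.eventually (eventually_gt_nhds hH)
          filter_upwards [e1, self_mem_nhdsWithin] with z h1 hz
          have hzx : (0:ℝ) < z - x := sub_pos.2 hz
          rw [slope_def_field, div_pos_iff] at h1
          rcases h1 with ⟨h1, h2⟩ | ⟨h1, h2⟩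
          · linarith
          · linarith
        exact (main (mono_dir hx0.ge ev)).frequently
    · -- h x > 0
      have ev : ∀ᶠ z in 𝓝[>] x, 0 < h z :=
        ((hhc.tendsto x).eventually (eventually_gt_nhds hx0)).filter_mono nhdsWithin_le_nhds
      exact (main (mono_dir hx0.le ev)).frequently
  -- step 2 : fencing for g
  have hgc : Continuous g := continuous_iff_continuousAt.2 fun t => (hg t).continuousAt
  have bound2 : g 1 ≤ g 0 + g' 0 * 1 + ‖u‖ ^ 2 * 1 ^ 2 / 2 := by
    have := image_le_of_deriv_right_le_deriv_boundary (f := g) (f' := g') (a := 0) (b := 1)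
      (B := fun t => g 0 + g' 0 * t + ‖u‖ ^ 2 * t ^ 2 / 2)
      (B' := fun t => g' 0 + ‖u‖ ^ 2 * t)
      hgc.continuousOn (fun x _ => (hg x).hasDerivWithinAt)
      (by simp)
      (by fun_prop)
      ?_ ?_
    · exact this (Set.right_mem_Icc.2 zero_le_one)
    · intro x _
      have h1 : HasDerivAt (fun t : ℝ => g 0 + g' 0 * t + ‖u‖ ^ 2 * t ^ 2 / 2)
          (g' 0 + ‖u‖ ^ 2 * x) x := by
        have hp : HasDerivAt (fun t : ℝ => t ^ 2) (2 * x) x := by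
          simpa using hasDerivAt_pow 2 x
        have := (((hasDerivAt_id x).const_mul (g' 0)).const_add (g 0)).add
          ((hp.const_mul (‖u‖ ^ 2)).div_const 2)
        exact this.congr_deriv (by ring)
      exact h1.hasDerivWithinAt
    · intro x hx
      exact bound1 x (Set.Ico_subset_Icc_self hx)
  -- translate back
  have e0 : γ 0 = w := by simp [hγdef]
  have e1 : γ 1 = w + u := by simp [hγdef]
  have eφ0 : φ 0 = Φ w := by rw [hφdef]; simp [e0]
  have eφ1 : φ 1 = Φ (w + u) := by rw [hφdef]; simp [e1]
  have eg'0 : g' 0 = (1 / ρ (Φ w)) * (inner ℝ (gradient Φ w) u : ℝ) := by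
    show (1 / ρ (φ 0)) * A (γ 0) u = _
    rw [eφ0, e0, hgradinner]
  have : θ (φ 1) ≤ θ (φ 0) + g' 0 * 1 + ‖u‖ ^ 2 * 1 ^ 2 / 2 := bound2
  rw [eφ0, eφ1] at this
  rw [eg'0] at this
  linarith
end
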